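/- Let N ≥ 3, α = 2π/N, R > 0, and 0 < h < √2·R. Let V be the electrostatic potential of the 2N unit point charges at the vertices A_ℓ = (R cos(ℓα + α/4), R sin(ℓα + α/4), h/2) and B_ℓ = (R cos(ℓα + α/4), −R sin(ℓα + α/4), −h/2), ℓ = 1, …, N, of an N-sided anti-prism. Then there exists t ∈ (0, 1) such that ∇V(t·R cos(α/4), 0, 0) = 0; that is, there is an equilibrium on the open line segment joining the center of the anti-prism to the midpoint (R cos(α/4), 0, 0) of the lateral edge connecting A_N and B_N (and, by symmetry, on each of the segments joining the center to the midpoints of the lateral edges). -/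

import Mathlib

noncomputable section

open Finset

abbrev E3 := EuclideanSpace ℝ (Fin 3)

/-- The point `(a, b, c)` of `ℝ³`. -/
def pt (a b c : ℝ) : E3 := (WithLp.equiv 2 (Fin 3 → ℝ)).symm ![a, b, c]

/-- The top vertices of the `N`-sided anti-prism of circumradius `R` and height `h`:
`A_ℓ = (R cos(ℓα + α/4), R sin(ℓα + α/4), h/2)` with `α = 2π/N`. -/
def Avert (N : ℕ) (R h : ℝ) (ℓ : Fin N) : E3 :=
  pt (R * Real.cos ((ℓ : ℕ) * (2 * Real.pi / N) + (2 * Real.pi / N) / 4))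
    (R * Real.sin ((ℓ : ℕ) * (2 * Real.pi / N) + (2 * Real.pi / N) / 4)) (h / 2)

/-- The bottom vertices of the `N`-sided anti-prism:
`B_ℓ = (R cos(ℓα + α/4), -R sin(ℓα + α/4), -h/2)` with `α = 2π/N`. -/
def Bvert (N : ℕ) (R h : ℝ) (ℓ : Fin N) : E3 :=
  pt (R * Real.cos ((ℓ : ℕ) * (2 * Real.pi / N) + (2 * Real.pi / N) / 4))
    (-(R * Real.sin ((ℓ : ℕ) * (2 * Real.pi / N) + (2 * Real.pi / N) / 4))) (-(h / 2))

/-- The electrostatic potential of unit point charges at the `2N` vertices of the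
anti-prism. -/
def Vanti (N : ℕ) (R h : ℝ) : E3 → ℝ :=
  fun x => ∑ ℓ : Fin N, (1 / ‖x - Avert N R h ℓ‖ + 1 / ‖x - Bvert N R h ℓ‖)

/-! ### Auxiliary material -/

lemma hasFDerivAt_inv_norm (v p : E3) (hp : p ≠ v) :
    HasFDerivAt (fun x : E3 => 1 / ‖x - v‖)
      ((-(‖p - v‖ ^ 3)⁻¹) • (innerSL ℝ (p - v))) p := by
  have hne : p - v ≠ 0 := sub_ne_zero.mpr hp
  have hn : ‖p - v‖ ≠ 0 := norm_ne_zero_iff.mpr hne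
  have h1 : HasFDerivAt (fun x : E3 => ‖x - v‖ ^ 2)
      (2 • (innerSL ℝ (p - v)).comp (ContinuousLinearMap.id ℝ E3)) p :=
    HasFDerivAt.norm_sq ((hasFDerivAt_id p).sub_const v)
  have h2 : HasDerivAt Real.sqrt (1 / (2 * Real.sqrt (‖p - v‖ ^ 2))) (‖p - v‖ ^ 2) :=
    Real.hasDerivAt_sqrt (by positivity)
  have h3 : HasFDerivAt (fun x : E3 => Real.sqrt (‖x - v‖ ^ 2))
      ((1 / (2 * Real.sqrt (‖p - v‖ ^ 2))) •
        (2 • (innerSL ℝ (p - v)).comp (ContinuousLinearMap.id ℝ E3))) p :=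
    h2.comp_hasFDerivAt p h1
  have hfun : (fun x : E3 => Real.sqrt (‖x - v‖ ^ 2)) = fun x : E3 => ‖x - v‖ :=
    funext fun x => Real.sqrt_sq (norm_nonneg _)
  rw [hfun] at h3
  have h5 : HasDerivAt (fun y : ℝ => y⁻¹) (-(‖p - v‖ ^ 2)⁻¹) ‖p - v‖ := hasDerivAt_inv hn
  have h6 := h5.comp_hasFDerivAt p h3
  have heq : ((-(‖p - v‖ ^ 2)⁻¹) • ((1 / (2 * Real.sqrt (‖p - v‖ ^ 2))) •
      (2 • (innerSL ℝ (p - v)).comp (ContinuousLinearMap.id ℝ E3))))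
      = (-(‖p - v‖ ^ 3)⁻¹) • (innerSL ℝ (p - v)) := by
    rw [Real.sqrt_sq (norm_nonneg _)]
    ext x
    simp only [ContinuousLinearMap.smul_apply, Pi.smul_apply,
      ContinuousLinearMap.comp_apply, ContinuousLinearMap.id_apply, smul_eq_mul,
      innerSL_apply_apply]
    field_simp
    ring
  rw [heq] at h6
  simpa only [one_div, Function.comp_def] using h6

lemma pt_sub (a b c a' b' c' : ℝ) : pt a b c - pt a' b' c' = pt (a-a') (b-b') (c-c') := by
  simp only [pt]
  ext i
  fin_cases i <;> simp [WithLp.equiv_symm_apply, PiLp.toLp_apply]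

lemma pt_ne (a b c a' b' c' : ℝ) (h : c ≠ c') : pt a b c ≠ pt a' b' c' := by
  intro he
  have := congrFun (congrArg (WithLp.equiv 2 (Fin 3 → ℝ)) he) 2
  exact h (by simpa [pt] using this)

lemma norm_pt (a b c : ℝ) : ‖pt a b c‖ = Real.sqrt (a^2 + b^2 + c^2) := by
  rw [EuclideanSpace.norm_eq]
  congr 1
  simp [pt, Fin.sum_univ_three, WithLp.equiv_symm_apply, PiLp.toLp_apply, sq_abs]

lemma inner_pt_single (a b c : ℝ) (i : Fin 3) :
    (inner ℝ (pt a b c) (EuclideanSpace.single i (1:ℝ)) : ℝ) = ![a,b,c] i := by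
  rw [EuclideanSpace.inner_single_right]
  simp [pt, WithLp.equiv_symm_apply, PiLp.toLp_apply]

lemma sum_cos_zero (N : ℕ) (β c : ℝ)
    (h1 : Complex.exp (β * Complex.I) ^ N = 1)
    (h2 : Complex.exp (β * Complex.I) ≠ 1) :
    ∑ ℓ : Fin N, Real.cos (ℓ * β + c) = 0 := by
  have key : ∑ ℓ ∈ Finset.range N, Complex.exp ((↑(ℓ * β + c) : ℂ) * Complex.I) = 0 := by
    have he : ∀ ℓ : ℕ, Complex.exp ((↑(ℓ * β + c):ℂ) * Complex.I)
        = Complex.exp (c * Complex.I) * (Complex.exp (β * Complex.I))^ℓ := by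
      intro ℓ
      rw [← Complex.exp_nat_mul, ← Complex.exp_add]
      push_cast
      ring_nf
    simp only [he, ← Finset.mul_sum]
    rw [geom_sum_eq h2, h1]
    simp
  have key2 := congrArg Complex.re key
  rw [Complex.re_sum] at key2
  simp only [Complex.exp_ofReal_mul_I_re] at key2
  rw [Fin.sum_univ_eq_sum_range (fun ℓ : ℕ => Real.cos (ℓ * β + c))]
  simpa using key2

lemma sum_cos_mul (N : ℕ) (hN : 3 ≤ N) (k : ℕ) (hk : k = 1 ∨ k = 2) (c : ℝ) :
    ∑ ℓ : Fin N, Real.cos (ℓ * (k * (2 * Real.pi / N)) + c) = 0 := by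
  have hNpos : (0:ℝ) < N := by positivity
  set β := (k:ℝ) * (2 * Real.pi / N) with hβ
  apply sum_cos_zero
  · rw [← Complex.exp_nat_mul]
    have : (N:ℂ) * (β * Complex.I) = (k:ℕ) * (2 * Real.pi * Complex.I) := by
      push_cast [hβ]
      have : (N:ℂ) ≠ 0 := by exact_mod_cast (by positivity : (0:ℝ) < N).ne'
      field_simp
    rw [this, Complex.exp_nat_mul, Complex.exp_two_pi_mul_I, one_pow]
  · intro he
    rw [Complex.exp_eq_one_iff] at he
    obtain ⟨n, hn⟩ := he
    have hC : (β:ℂ) = (n:ℝ) * (2 * Real.pi) := by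
      apply mul_right_cancel₀ Complex.I_ne_zero
      rw [hn]; push_cast; ring
    have hβR : β = (n:ℝ) * (2 * Real.pi) := by exact_mod_cast hC
    have hπ := Real.pi_pos
    have hk1 : (1:ℝ) ≤ (k:ℝ) := by rcases hk with h | h <;> simp [h]
    have hk2 : (k:ℝ) ≤ 2 := by rcases hk with h | h <;> simp [h]
    have hN3 : (3:ℝ) ≤ (N:ℝ) := by exact_mod_cast hN
    have hβpos : 0 < β := by
      rw [hβ]
      have : 0 < 2 * Real.pi / N := by positivity
      nlinarith
    have hβlt : β < 2 * Real.pi := by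
      rw [hβ, mul_div_assoc']
      rw [div_lt_iff₀ hNpos]
      nlinarith
    have h0 : (0:ℝ) < (n:ℝ) := by nlinarith
    have h1 : (n:ℝ) < 1 := by nlinarith
    have h0' : (0:ℤ) < n := by exact_mod_cast h0
    have h1' : n < (1:ℤ) := by exact_mod_cast h1
    omega

/-! ### The one-dimensional reduction -/

/-- angle of the `ℓ`-th vertex -/
def thF (N : ℕ) (ℓ : Fin N) : ℝ := (ℓ : ℕ) * (2 * Real.pi / N) + (2 * Real.pi / N) / 4

def aF (N : ℕ) (R : ℝ) (ℓ : Fin N) : ℝ := R * Real.cos (thF N ℓ)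

def bF (N : ℕ) (R : ℝ) (ℓ : Fin N) : ℝ := R * Real.sin (thF N ℓ)

def qF (N : ℕ) (R h : ℝ) (ℓ : Fin N) (u : ℝ) : ℝ :=
  (u - aF N R ℓ)^2 + (bF N R ℓ)^2 + (h/2)^2

/-- The `x`-component of the gradient of the potential along the axis. -/
def FF (N : ℕ) (R h : ℝ) (u : ℝ) : ℝ :=
  ∑ ℓ : Fin N, (-2) * (u - aF N R ℓ) * ((Real.sqrt (qF N R h ℓ u))^3)⁻¹

/-- The candidate total derivative of the potential at an axis point. -/
def TT (N : ℕ) (R h : ℝ) (u : ℝ) : E3 →L[ℝ] ℝ :=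
  ∑ ℓ : Fin N,
    ((-(‖pt u 0 0 - Avert N R h ℓ‖ ^ 3)⁻¹) • innerSL ℝ (pt u 0 0 - Avert N R h ℓ)
      + (-(‖pt u 0 0 - Bvert N R h ℓ‖ ^ 3)⁻¹) • innerSL ℝ (pt u 0 0 - Bvert N R h ℓ))

lemma sub_Avert (N : ℕ) (R h u : ℝ) (ℓ : Fin N) :
    pt u 0 0 - Avert N R h ℓ = pt (u - aF N R ℓ) (-(bF N R ℓ)) (-(h/2)) := by
  rw [Avert, pt_sub, zero_sub, zero_sub]
  rfl

lemma sub_Bvert (N : ℕ) (R h u : ℝ) (ℓ : Fin N) :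
    pt u 0 0 - Bvert N R h ℓ = pt (u - aF N R ℓ) (bF N R ℓ) (h/2) := by
  rw [Bvert, pt_sub, zero_sub, zero_sub, neg_neg, neg_neg]
  rfl

lemma norm_sub_Avert (N : ℕ) (R h u : ℝ) (ℓ : Fin N) :
    ‖pt u 0 0 - Avert N R h ℓ‖ = Real.sqrt (qF N R h ℓ u) := by
  rw [sub_Avert, norm_pt]
  congr 1
  simp only [qF]
  try ring

lemma norm_sub_Bvert (N : ℕ) (R h u : ℝ) (ℓ : Fin N) :
    ‖pt u 0 0 - Bvert N R h ℓ‖ = Real.sqrt (qF N R h ℓ u) := by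
  rw [sub_Bvert, norm_pt]
  rfl

lemma ne_Avert (N : ℕ) (R h u : ℝ) (hh : 0 < h) (ℓ : Fin N) :
    pt u 0 0 ≠ Avert N R h ℓ := by
  rw [Avert]; exact pt_ne _ _ _ _ _ _ (by positivity : (0:ℝ) < h/2).ne

lemma ne_Bvert (N : ℕ) (R h u : ℝ) (hh : 0 < h) (ℓ : Fin N) :
    pt u 0 0 ≠ Bvert N R h ℓ := by
  rw [Bvert]
  refine pt_ne _ _ _ _ _ _ ?_
  have : (0:ℝ) < h/2 := by positivity
  intro hc
  linarith

lemma hasFDerivAt_Vanti (N : ℕ) (R h u : ℝ) (hh : 0 < h) :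
    HasFDerivAt (Vanti N R h) (TT N R h u) (pt u 0 0) := by
  unfold Vanti TT
  exact HasFDerivAt.fun_sum fun ℓ _ =>
    (hasFDerivAt_inv_norm _ _ (ne_Avert N R h u hh ℓ)).add
      (hasFDerivAt_inv_norm _ _ (ne_Bvert N R h u hh ℓ))

lemma TT_apply0 (N : ℕ) (R h u : ℝ) :
    TT N R h u (EuclideanSpace.single 0 1) = FF N R h u := by
  rw [TT, ContinuousLinearMap.sum_apply, FF]
  refine Finset.sum_congr rfl fun ℓ _ => ?_
  simp only [ContinuousLinearMap.add_apply, ContinuousLinearMap.smul_apply,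
    innerSL_apply_apply, smul_eq_mul]
  rw [norm_sub_Avert, norm_sub_Bvert, sub_Avert, sub_Bvert,
    inner_pt_single, inner_pt_single]
  simp only [Matrix.cons_val_zero]
  ring

lemma TT_apply1 (N : ℕ) (R h u : ℝ) :
    TT N R h u (EuclideanSpace.single 1 1) = 0 := by
  rw [TT, ContinuousLinearMap.sum_apply]
  refine Finset.sum_eq_zero fun ℓ _ => ?_
  simp only [ContinuousLinearMap.add_apply, ContinuousLinearMap.smul_apply,
    innerSL_apply_apply, smul_eq_mul]
  rw [norm_sub_Avert, norm_sub_Bvert, sub_Avert, sub_Bvert,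
    inner_pt_single, inner_pt_single]
  simp only [Matrix.cons_val_one, Matrix.head_cons, Matrix.cons_val_zero]
  ring

lemma TT_apply2 (N : ℕ) (R h u : ℝ) :
    TT N R h u (EuclideanSpace.single 2 1) = 0 := by
  rw [TT, ContinuousLinearMap.sum_apply]
  refine Finset.sum_eq_zero fun ℓ _ => ?_
  simp only [ContinuousLinearMap.add_apply, ContinuousLinearMap.smul_apply,
    innerSL_apply_apply, smul_eq_mul]
  rw [norm_sub_Avert, norm_sub_Bvert, sub_Avert, sub_Bvert,
    inner_pt_single, inner_pt_single]
  simp only [Matrix.cons_val_two, Matrix.tail_cons, Matrix.head_cons]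
  ring

lemma TT_eq_zero (N : ℕ) (R h u : ℝ) (hF : FF N R h u = 0) : TT N R h u = 0 := by
  have : (TT N R h u : E3 →ₗ[ℝ] ℝ) = (0 : E3 →L[ℝ] ℝ) := by
    apply Module.Basis.ext (EuclideanSpace.basisFun (Fin 3) ℝ).toBasis
    intro i
    simp only [OrthonormalBasis.coe_toBasis, EuclideanSpace.basisFun_apply,
      ContinuousLinearMap.coe_coe]
    fin_cases i
    · show TT N R h u (EuclideanSpace.single 0 1) = _
      rw [TT_apply0, hF]; rfl
    · show TT N R h u (EuclideanSpace.single 1 1) = _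
      rw [TT_apply1]; rfl
    · show TT N R h u (EuclideanSpace.single 2 1) = _
      rw [TT_apply2]; rfl
  exact ContinuousLinearMap.coe_injective this

/-! ### Analysis of `FF` -/

lemma deriv_term (a c : ℝ) (hc : 0 < c) :
    HasDerivAt (fun u : ℝ => (-2) * (u - a) * ((Real.sqrt ((u - a)^2 + c))^3)⁻¹)
      (-2 * ((Real.sqrt (a^2 + c))^3)⁻¹ + 6 * a^2 * ((Real.sqrt (a^2 + c))^5)⁻¹) 0 := by
  have hac : 0 < a^2 + c := by positivity
  have hspos : 0 < Real.sqrt (a^2 + c) := Real.sqrt_pos.mpr hac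
  have hs2 : (Real.sqrt (a^2 + c))^2 = a^2 + c := Real.sq_sqrt hac.le
  set s := Real.sqrt (a^2 + c) with hs
  have h1 : HasDerivAt (fun u : ℝ => (u - a)^2 + c) (2 * (0 - a)) 0 := by
    have := (((hasDerivAt_id (0:ℝ)).sub_const a).pow 2).add_const c
    refine this.congr_deriv ?_
    norm_num
  have h2 : HasDerivAt (fun u : ℝ => Real.sqrt ((u - a)^2 + c)) ((0 - a) / s) 0 := by
    have hne : ((0:ℝ) - a)^2 + c ≠ 0 := by positivity
    have := h1.sqrt hne
    convert this using 1
    rw [show ((0:ℝ) - a)^2 + c = a^2 + c by ring, ← hs]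
    field_simp
  have h3 : HasDerivAt (fun u : ℝ => (Real.sqrt ((u - a)^2 + c))^3)
      (3 * s^2 * ((0 - a) / s)) 0 := by
    have := h2.pow 3
    refine this.congr_deriv ?_
    rw [show Real.sqrt (((0:ℝ) - a)^2 + c) = s by rw [hs]; congr 1; ring]
    norm_num
  have h4 : HasDerivAt (fun u : ℝ => ((Real.sqrt ((u - a)^2 + c))^3)⁻¹)
      (-(3 * s^2 * ((0 - a) / s)) / (s^3)^2) 0 := by
    have hne : (Real.sqrt (((0:ℝ) - a)^2 + c))^3 ≠ 0 := by
      have : (0:ℝ) < Real.sqrt ((0 - a)^2 + c) := Real.sqrt_pos.mpr (by positivity)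
      positivity
    have := h3.inv hne
    refine this.congr_deriv ?_
    rw [show Real.sqrt (((0:ℝ) - a)^2 + c) = s by rw [hs]; congr 1; ring]
  have h5 : HasDerivAt (fun u : ℝ => (-2) * (u - a)) (-2) 0 := by
    have := ((hasDerivAt_id (0:ℝ)).sub_const a).const_mul (-2)
    refine this.congr_deriv ?_
    norm_num
  have h6 := h5.mul h4
  refine h6.congr_deriv ?_
  rw [show Real.sqrt (((0:ℝ) - a)^2 + c) = s by rw [hs]; congr 1; ring]
  field_simp
  ring

lemma q0_eq (N : ℕ) (R h : ℝ) (ℓ : Fin N) :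
    (aF N R ℓ)^2 + ((bF N R ℓ)^2 + (h/2)^2) = R^2 + (h/2)^2 := by
  have ht := Real.sin_sq_add_cos_sq (thF N ℓ)
  simp only [aF, bF]
  nlinarith [ht]

lemma sum_aF (N : ℕ) (hN : 3 ≤ N) (R : ℝ) : ∑ ℓ : Fin N, aF N R ℓ = 0 := by
  have h0 := sum_cos_mul N hN 1 (Or.inl rfl) ((2 * Real.pi / N) / 4)
  simp only [Nat.cast_one, one_mul] at h0
  simp only [aF, thF, ← Finset.mul_sum]
  rw [h0, mul_zero]

lemma sum_aF_sq (N : ℕ) (hN : 3 ≤ N) (R : ℝ) :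
    ∑ ℓ : Fin N, (aF N R ℓ)^2 = N * R^2 / 2 := by
  have h0 := sum_cos_mul N hN 2 (Or.inr rfl) ((2 * Real.pi / N) / 2)
  have hc : ∀ ℓ : Fin N, (aF N R ℓ)^2
      = R^2 * (1/2) + R^2 * (Real.cos ((ℓ:ℕ) * ((2:ℕ) * (2 * Real.pi / N)) + (2 * Real.pi / N) / 2) / 2) := by
    intro ℓ
    have := Real.cos_sq (thF N ℓ)
    simp only [aF]
    rw [mul_pow, this, show 2 * thF N ℓ = (ℓ:ℕ) * ((2:ℕ) * (2 * Real.pi / N)) + (2 * Real.pi / N) / 2 by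
      simp only [thF]; push_cast; ring]
    ring
  rw [Finset.sum_congr rfl (fun ℓ _ => hc ℓ), Finset.sum_add_distrib,
    Finset.sum_const, ← Finset.mul_sum, ← Finset.sum_div, h0]
  simp
  ring

lemma FF_zero (N : ℕ) (hN : 3 ≤ N) (R h : ℝ) : FF N R h 0 = 0 := by
  rw [FF]
  have hstep : ∀ ℓ ∈ (Finset.univ : Finset (Fin N)),
      (-2) * ((0:ℝ) - aF N R ℓ) * ((Real.sqrt (qF N R h ℓ 0))^3)⁻¹
        = (2 * ((Real.sqrt (R^2 + (h/2)^2))^3)⁻¹) * aF N R ℓ := by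
    intro ℓ _
    have : qF N R h ℓ 0 = R^2 + (h/2)^2 := by
      simp only [qF]
      rw [← q0_eq N R h ℓ]
      ring
    rw [this]
    ring
  rw [Finset.sum_congr rfl hstep, ← Finset.mul_sum, sum_aF N hN R, mul_zero]

lemma FF_hasDerivAt (N : ℕ) (hN : 3 ≤ N) (R h : ℝ) (hh : 0 < h) :
    HasDerivAt (FF N R h)
      ((N:ℝ) * (3 * R^2 * ((Real.sqrt (R^2 + (h/2)^2))^5)⁻¹
        - 2 * ((Real.sqrt (R^2 + (h/2)^2))^3)⁻¹)) 0 := by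
  have key : ∀ ℓ : Fin N,
      HasDerivAt (fun u : ℝ => (-2) * (u - aF N R ℓ) * ((Real.sqrt (qF N R h ℓ u))^3)⁻¹)
        (-2 * ((Real.sqrt (R^2 + (h/2)^2))^3)⁻¹
          + 6 * (aF N R ℓ)^2 * ((Real.sqrt (R^2 + (h/2)^2))^5)⁻¹) 0 := by
    intro ℓ
    have hfn : (fun u : ℝ => (-2) * (u - aF N R ℓ) * ((Real.sqrt (qF N R h ℓ u))^3)⁻¹)
        = (fun u : ℝ => (-2) * (u - aF N R ℓ)
            * ((Real.sqrt ((u - aF N R ℓ)^2 + ((bF N R ℓ)^2 + (h/2)^2)))^3)⁻¹) := by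
      funext u
      simp only [qF]
      ring_nf
    rw [hfn, ← q0_eq N R h ℓ]
    have hh' : h ≠ 0 := hh.ne'
    exact deriv_term _ _ (by positivity)
  have hsum := HasDerivAt.fun_sum (fun ℓ (_ : ℓ ∈ (Finset.univ : Finset (Fin N))) => key ℓ)
  have hFF : HasDerivAt (FF N R h)
      (∑ ℓ : Fin N, (-2 * ((Real.sqrt (R^2 + (h/2)^2))^3)⁻¹
        + 6 * (aF N R ℓ)^2 * ((Real.sqrt (R^2 + (h/2)^2))^5)⁻¹)) 0 := hsum
  convert hFF using 1
  rw [Finset.sum_add_distrib, Finset.sum_const]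
  rw [show ∀ x : ℝ, (∑ ℓ : Fin N, 6 * (aF N R ℓ)^2 * x) = 6 * (∑ ℓ : Fin N, (aF N R ℓ)^2) * x from
    fun x => by rw [Finset.mul_sum, Finset.sum_mul]]
  rw [sum_aF_sq N hN R]
  simp only [Finset.card_univ, Fintype.card_fin, nsmul_eq_mul]
  ring

lemma FF_cont (N : ℕ) (R h : ℝ) (hh : 0 < h) : Continuous (FF N R h) := by
  unfold FF
  refine continuous_finset_sum _ fun ℓ _ => ?_
  have hq : Continuous (fun u : ℝ => qF N R h ℓ u) := by
    simp only [qF]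
    fun_prop
  have hne : ∀ u : ℝ, (Real.sqrt (qF N R h ℓ u))^3 ≠ 0 := by
    intro u
    have h1 : 0 < qF N R h ℓ u := by simp only [qF]; positivity
    exact pow_ne_zero 3 (Real.sqrt_ne_zero'.mpr h1).symm.symm
  exact (continuous_const.mul (continuous_id.sub continuous_const)).mul
    (((Real.continuous_sqrt.comp hq).pow 3).inv₀ hne)

lemma FF_neg (N : ℕ) (hN : 3 ≤ N) (R h : ℝ) (hR : 0 < R) (hh : 0 < h) :
    FF N R h (R * Real.cos ((2 * Real.pi / N) / 4)) < 0 := by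
  have hπ := Real.pi_pos
  have hN3 : (3:ℝ) ≤ (N:ℝ) := by exact_mod_cast hN
  have hNpos : (0:ℝ) < N := by linarith
  set α := 2 * Real.pi / N with hα
  have hαpos : 0 < α := by positivity
  have hαle : α ≤ 2 * Real.pi / 3 := by
    rw [hα]
    apply div_le_div_of_nonneg_left (by positivity) (by norm_num) hN3
  have hαN : (N:ℝ) * α = 2 * Real.pi := by
    rw [hα]; field_simp
  set uM := R * Real.cos (α / 4) with huM
  have hdiff : ∀ ℓ : Fin N,
      uM - aF N R ℓ = R * (2 * Real.sin ((ℓ:ℕ) * α / 2 + α / 4) * Real.sin ((ℓ:ℕ) * α / 2)) := by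
    intro ℓ
    simp only [aF, thF, huM, ← hα]
    rw [← mul_sub]
    congr 1
    rw [Real.cos_sub_cos]
    rw [show (α/4 + ((ℓ:ℕ) * α + α/4))/2 = (ℓ:ℕ) * α / 2 + α / 4 by ring,
      show (α/4 - ((ℓ:ℕ) * α + α/4))/2 = -((ℓ:ℕ) * α / 2) by ring, Real.sin_neg]
    ring
  have hlt : ∀ ℓ : Fin N, (ℓ:ℝ) ≤ (N:ℝ) - 1 := by
    intro ℓ
    have := ℓ.isLt
    have : ((ℓ:ℕ):ℝ) + 1 ≤ (N:ℝ) := by exact_mod_cast Nat.succ_le_of_lt this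
    linarith
  have hnonneg : ∀ ℓ : Fin N, 0 ≤ uM - aF N R ℓ := by
    intro ℓ
    rw [hdiff ℓ]
    have hℓpos : (0:ℝ) ≤ (ℓ:ℕ) := Nat.cast_nonneg _
    have h1 : 0 ≤ Real.sin ((ℓ:ℕ) * α / 2) := by
      apply Real.sin_nonneg_of_nonneg_of_le_pi (by positivity)
      nlinarith [hlt ℓ, mul_le_mul_of_nonneg_right (hlt ℓ) hαpos.le]
    have h2 : 0 ≤ Real.sin ((ℓ:ℕ) * α / 2 + α / 4) := by
      apply Real.sin_nonneg_of_nonneg_of_le_pi (by positivity)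
      nlinarith [mul_le_mul_of_nonneg_right (hlt ℓ) hαpos.le]
    positivity
  have hqpos : ∀ ℓ : Fin N, 0 < qF N R h ℓ uM := by
    intro ℓ
    have hh' : h ≠ 0 := hh.ne'
    simp only [qF]
    positivity
  have hterm : ∀ ℓ ∈ (Finset.univ : Finset (Fin N)),
      (-2) * (uM - aF N R ℓ) * ((Real.sqrt (qF N R h ℓ uM))^3)⁻¹ ≤ 0 := by
    intro ℓ _
    have hinv : 0 < ((Real.sqrt (qF N R h ℓ uM))^3)⁻¹ :=
      inv_pos.mpr (pow_pos (Real.sqrt_pos.mpr (hqpos ℓ)) 3)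
    nlinarith [hnonneg ℓ, hinv]
  have hone : ∃ ℓ ∈ (Finset.univ : Finset (Fin N)),
      (-2) * (uM - aF N R ℓ) * ((Real.sqrt (qF N R h ℓ uM))^3)⁻¹ < 0 := by
    refine ⟨⟨1, by omega⟩, Finset.mem_univ _, ?_⟩
    set ℓ1 : Fin N := ⟨1, by omega⟩ with hℓ1
    have hval : ((ℓ1:ℕ):ℝ) = 1 := by rw [hℓ1]; norm_num
    have hpos : 0 < uM - aF N R ℓ1 := by
      rw [hdiff ℓ1, hval]
      have h1 : 0 < Real.sin (1 * α / 2) := by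
        apply Real.sin_pos_of_pos_of_lt_pi (by positivity)
        nlinarith
      have h2 : 0 < Real.sin (1 * α / 2 + α / 4) := by
        apply Real.sin_pos_of_pos_of_lt_pi (by positivity)
        nlinarith
      positivity
    have hinv : 0 < ((Real.sqrt (qF N R h ℓ1 uM))^3)⁻¹ :=
      inv_pos.mpr (pow_pos (Real.sqrt_pos.mpr (hqpos ℓ1)) 3)
    nlinarith
  calc FF N R h uM < ∑ _ℓ : Fin N, (0:ℝ) := Finset.sum_lt_sum hterm hone
    _ = 0 := by simp

/-- if `0 < h < √2 R`, then there is an equilibrium of the anti-prism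
potential on the open segment joining the center to the midpoint
`(R cos(α/4), 0, 0)` of a lateral edge. -/
theorem stmt12 (N : ℕ) (hN : 3 ≤ N) (R h : ℝ) (hR : 0 < R) (hh : 0 < h)
    (hcrit : h < Real.sqrt 2 * R) :
    ∃ t ∈ Set.Ioo (0 : ℝ) 1,
      fderiv ℝ (Vanti N R h)
        (pt (t * (R * Real.cos ((2 * Real.pi / N) / 4))) 0 0) = 0 := by
  have hπ := Real.pi_pos
  have hN3 : (3:ℝ) ≤ (N:ℝ) := by exact_mod_cast hN
  set α := 2 * Real.pi / N with hα
  have hαpos : 0 < α := by positivity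
  have hαle : α ≤ 2 * Real.pi / 3 := by
    rw [hα]
    apply div_le_div_of_nonneg_left (by positivity) (by norm_num) hN3
  have hcos : 0 < Real.cos (α / 4) := by
    apply Real.cos_pos_of_mem_Ioo
    constructor <;> nlinarith
  set uM := R * Real.cos (α / 4) with huM
  have huMpos : 0 < uM := by positivity
  -- the derivative of `FF` at `0` is positive
  set S := Real.sqrt (R^2 + (h/2)^2) with hS
  have hSpos : 0 < S := Real.sqrt_pos.mpr (by positivity)
  have hS2 : S^2 = R^2 + (h/2)^2 := Real.sq_sqrt (by positivity)
  have hh2 : h^2 < 2 * R^2 := by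
    have h2 : Real.sqrt 2 ^ 2 = 2 := Real.sq_sqrt (by norm_num)
    nlinarith [Real.sqrt_nonneg 2]
  have hDpos : 0 < (N:ℝ) * (3 * R^2 * (S^5)⁻¹ - 2 * (S^3)⁻¹) := by
    have hkey : 3 * R^2 * (S^5)⁻¹ - 2 * (S^3)⁻¹ = (3 * R^2 - 2 * S^2) * (S^5)⁻¹ := by
      field_simp
    rw [hkey]
    have : 0 < 3 * R^2 - 2 * S^2 := by nlinarith
    have hNpos : (0:ℝ) < N := by linarith
    positivity
  -- find a point close to `0` where `FF` is positive
  have hder := FF_hasDerivAt N hN R h hh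
  rw [← hS] at hder
  have hslope := hasDerivAt_iff_tendsto_slope.mp hder
  have h1 : ∀ᶠ u in nhdsWithin (0:ℝ) {(0:ℝ)}ᶜ, 0 < slope (FF N R h) 0 u :=
    hslope.eventually (eventually_gt_nhds hDpos)
  have h3 : ∀ᶠ u in nhdsWithin (0:ℝ) (Set.Ioi 0), 0 < slope (FF N R h) 0 u :=
    h1.filter_mono (nhdsWithin_mono 0 (fun x hx => ne_of_gt hx))
  have h4 : ∀ᶠ u in nhdsWithin (0:ℝ) (Set.Ioi 0), u ∈ Set.Ioo (0:ℝ) uM := by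
    have : Set.Ioo (0:ℝ) uM ∈ nhdsWithin (0:ℝ) (Set.Ioi 0) :=
      Ioo_mem_nhdsGT_of_mem ⟨le_refl 0, huMpos⟩
    exact this
  obtain ⟨u1, hsl, hu1⟩ := (h3.and h4).exists
  have hFFu1 : 0 < FF N R h u1 := by
    rw [slope_def_field, FF_zero N hN R h, sub_zero, sub_zero] at hsl
    rcases div_pos_iff.mp hsl with ⟨hp, _⟩ | ⟨_, hq⟩
    · exact hp
    · linarith [hu1.1]
  -- intermediate value theorem
  have hcont : ContinuousOn (FF N R h) (Set.Icc u1 uM) := (FF_cont N R h hh).continuousOn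
  have hmem : (0:ℝ) ∈ Set.Ioo (FF N R h uM) (FF N R h u1) := by
    constructor
    · rw [huM, hα]
      exact FF_neg N hN R h hR hh
    · exact hFFu1
  obtain ⟨c, hc, hFc⟩ := intermediate_value_Ioo' hu1.2.le hcont hmem
  refine ⟨c / uM, ⟨?_, ?_⟩, ?_⟩
  · exact div_pos (lt_trans hu1.1 hc.1) huMpos
  · exact (div_lt_one huMpos).mpr hc.2
  · rw [show c / uM * (R * Real.cos (α/4)) = c by
      rw [← huM]; field_simp]
    rw [(hasFDerivAt_Vanti N R h c hh).fderiv]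
    exact TT_eq_zero N R h c hFc
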